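/- A function ℓ : Ob(C) → ℕ on a category C with terminal object 1 lifts to a stratification functor L : C → (ℕ, ≥) if and only if: (i) ℓ(1) = 0; (ii) for every object X and every k ≤ ℓ(X), there is a unique pair (Y, f) with ℓ(Y) = k and f : X → Y; and (iii) there are no arrows X → Y with ℓ(X) < ℓ(Y). -/
import Mathlib


open CategoryTheory

universe v u

/-- A chain of "individual" arrows, i.e. arrows decreasing the level function `L`
by exactly `1` at each step. -/
inductive IndivChain {C : Type u} [Category.{v} C] (L : C → ℕ) : C → C → Type (max u v)
  | nil (X : C) : IndivChain L X X
  | cons {X Y Z : C} (f : X ⟶ Y) (hf : L X = L Y + 1) (c : IndivChain L Y Z) :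
      IndivChain L X Z

/-- The composite of a chain of individual arrows. -/
def IndivChain.comp {C : Type u} [Category.{v} C] {L : C → ℕ} :
    {X Y : C} → IndivChain L X Y → (X ⟶ Y)
  | _, _, .nil X => 𝟙 X
  | _, _, .cons f _ c => f ≫ c.comp

/-- An arrow is individual (with respect to a level function `L`) if it decreases `L`
by exactly one. -/
def IsIndividual {C : Type u} [Category.{v} C] (L : C → ℕ) {X Y : C} (_f : X ⟶ Y) : Prop :=
  L X = L Y + 1

/-- A stratification of a strict category `C` with chosen terminal object `one`.
It consists of a functor `L : C ⥤ (ℕ, ≥)` (a level function which is antitone along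
arrows) such that:
* `L X = 0` iff `X` is the chosen terminal object;
* any arrow `f : X ⟶ Y` with `L X = L Y` is an identity (up to equality of objects);
* every arrow `f : X ⟶ Y` which strictly decreases `L` factors uniquely as a composite
  of individual arrows (each decreasing `L` by exactly one). -/
structure Stratification (C : Type u) [Category.{v} C] (one : C) where
  L : C → ℕ
  mono : ∀ {X Y : C}, (X ⟶ Y) → L Y ≤ L X
  zero_iff : ∀ X : C, L X = 0 ↔ X = one
  level_eq : ∀ {X Y : C} (f : X ⟶ Y), L X = L Y → ∃ h : X = Y, f = eqToHom h
  fact : ∀ {X Y : C} (f : X ⟶ Y), L Y < L X →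
    ∃ c : IndivChain L X Y, c.comp = f ∧ ∀ c' : IndivChain L X Y, c'.comp = f → c' = c

namespace IndivChain

variable {C : Type u} [Category.{v} C] {L : C → ℕ}

theorem le_of_chain : ∀ {X Y : C}, IndivChain L X Y → L Y ≤ L X
  | _, _, .nil _ => le_refl _
  | _, _, .cons _ hf c => by have := le_of_chain c; omega

/-- Concatenation of chains. -/
def append : ∀ {X Y Z : C}, IndivChain L X Y → IndivChain L Y Z → IndivChain L X Z
  | _, _, _, .nil _, d => d
  | _, _, _, .cons f hf c, d => .cons f hf (c.append d)

theorem comp_append : ∀ {X Y Z : C} (c : IndivChain L X Y) (d : IndivChain L Y Z),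
    (c.append d).comp = c.comp ≫ d.comp
  | _, _, _, .nil _, d => by simp [append, comp]
  | _, _, _, .cons f hf c, d => by simp [append, comp, comp_append c d]

/-- The object and composite arrow obtained by truncating a chain at level `k`. -/
def split : ∀ {X Z : C}, IndivChain L X Z → ℕ → Σ Y : C, X ⟶ Y
  | X, _, .nil _, _ => ⟨X, 𝟙 X⟩
  | X, _, .cons f _ c, k =>
      if L X = k then ⟨X, 𝟙 X⟩ else ⟨(c.split k).1, f ≫ (c.split k).2⟩

theorem split_level : ∀ {X Z : C} (c : IndivChain L X Z) (k : ℕ),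
    L Z ≤ k → k ≤ L X → L (c.split k).1 = k
  | _, _, .nil _, _, h1, h2 => by simp only [split]; omega
  | X, _, .cons (Y := M) f hf c, k, h1, h2 => by
      by_cases hX : L X = k
      · simp [split, hX]
      · rw [split, if_neg hX]
        exact split_level c k h1 (by omega)

theorem split_append : ∀ {X Y Z : C} (c : IndivChain L X Y) (d : IndivChain L Y Z),
    (c.append d).split (L Y) = ⟨Y, c.comp⟩
  | X, _, _, .nil _, d => by
      cases d with
      | nil => simp [append, split, comp]
      | cons g hg e => simp [append, split, comp]
  | X, _, _, .cons (Y := M) f hf c, d => by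
      have hM : L _ ≤ L M := le_of_chain c
      rw [show (IndivChain.cons f hf c).append d = .cons f hf (c.append d) from rfl,
        split, if_neg (by omega)]
      rw [split_append c d]
      rfl

theorem chain_eq
    (hu : ∀ (X : C) (k : ℕ), k ≤ L X → ∃! p : Σ Y : C, X ⟶ Y, L p.1 = k) :
    ∀ {X Y : C} (c c' : IndivChain L X Y), c = c'
  | _, _, .nil X, c' => by
      cases c' with
      | nil => rfl
      | cons f hf d => have := le_of_chain d; omega
  | X, _, .cons (Y := M) f hf d, c' => by
      cases c' with
      | nil => have := le_of_chain d; omega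
      | cons f' hf' d' =>
        rename_i M'
        obtain ⟨p, hp, hup⟩ := hu X (L M) (by omega)
        have e : (⟨M, f⟩ : Σ Y, _ ⟶ Y) = ⟨M', f'⟩ :=
          (hup ⟨M, f⟩ rfl).trans (hup ⟨M', f'⟩ (show L M' = L M by omega)).symm
        obtain ⟨h1, h2⟩ := Sigma.mk.inj_iff.mp e
        subst h1
        obtain rfl := eq_of_heq h2
        rw [chain_eq hu d d']

theorem hom_eq
    (hu : ∀ (X : C) (k : ℕ), k ≤ L X → ∃! p : Σ Y : C, X ⟶ Y, L p.1 = k)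
    {X Y : C} (hL : L Y ≤ L X) (f g : X ⟶ Y) : f = g := by
  obtain ⟨p, hp, hup⟩ := hu X (L Y) hL
  have e : (⟨Y, f⟩ : Σ Z, X ⟶ Z) = ⟨Y, g⟩ := (hup ⟨Y, f⟩ rfl).trans (hup ⟨Y, g⟩ rfl).symm
  exact eq_of_heq (Sigma.mk.inj_iff.mp e).2

theorem chain_exists
    (hu : ∀ (X : C) (k : ℕ), k ≤ L X → ∃! p : Σ Y : C, X ⟶ Y, L p.1 = k)
    (hmono : ∀ {X Y : C}, (X ⟶ Y) → L Y ≤ L X) :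
    ∀ (n : ℕ) {X Y : C} (f : X ⟶ Y), L X - L Y = n → Nonempty (IndivChain L X Y) := by
  intro n
  induction n with
  | zero =>
    intro X Y f hn
    have hle : L Y ≤ L X := hmono f
    obtain ⟨p, hp, hup⟩ := hu X (L X) le_rfl
    have e : (⟨X, 𝟙 X⟩ : Σ Z, X ⟶ Z) = ⟨Y, f⟩ :=
      (hup ⟨X, 𝟙 X⟩ rfl).trans (hup ⟨Y, f⟩ (by simp; omega)).symm
    obtain ⟨h1, _⟩ := Sigma.mk.inj_iff.mp e
    subst h1
    exact ⟨.nil X⟩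
  | succ n ih =>
    intro X Y f hn
    have hle : L Y ≤ L X := hmono f
    have hlt : L Y < L X := by omega
    obtain ⟨⟨Z, g⟩, hZ, _⟩ := hu X (L X - 1) (by omega)
    simp only at hZ
    obtain ⟨⟨W, h⟩, hW, _⟩ := hu Z (L Y) (by omega)
    simp only at hW
    obtain ⟨q, hq, huq⟩ := hu X (L Y) (by omega)
    have e : (⟨W, g ≫ h⟩ : Σ V, X ⟶ V) = ⟨Y, f⟩ :=
      (huq ⟨W, g ≫ h⟩ hW).trans (huq ⟨Y, f⟩ rfl).symm
    obtain ⟨h1, _⟩ := Sigma.mk.inj_iff.mp e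
    subst h1
    obtain ⟨c⟩ := ih h (by omega)
    exact ⟨.cons g (by omega) c⟩

end IndivChain

/-- A function `ℓ : Ob(C) → ℕ` on a category `C` with terminal object `1`
lifts to a stratification functor `L : C ⥤ (ℕ, ≥)` if and only if:
(i) `ℓ 1 = 0`;
(ii) for every object `X` and every `k ≤ ℓ X` there is a unique pair `(Y, f)` with
`f : X ⟶ Y` and `ℓ Y = k`; and
(iii) there are no arrows `X ⟶ Y` with `ℓ X < ℓ Y`. -/
theorem stratification_lift_iff {C : Type u} [Category.{v} C] (one : C)
    (hone : Limits.IsTerminal one) (ℓ : C → ℕ) :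
    (∃ S : Stratification C one, S.L = ℓ) ↔
      (ℓ one = 0
        ∧ (∀ (X : C) (k : ℕ), k ≤ ℓ X → ∃! p : Σ Y : C, X ⟶ Y, ℓ p.1 = k)
        ∧ (∀ {X Y : C}, (X ⟶ Y) → ¬ ℓ X < ℓ Y)) := by
  constructor
  · rintro ⟨S, rfl⟩
    have hone0 : S.L one = 0 := (S.zero_iff one).mpr rfl
    refine ⟨hone0, ?_, fun f h => absurd (S.mono f) (by omega)⟩
    -- a chain realizing any arrow
    have chainOf : ∀ {X Y : C} (f : X ⟶ Y), ∃ c : IndivChain S.L X Y, c.comp = f := by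
      intro X Y f
      rcases lt_or_eq_of_le (S.mono f) with h | h
      · obtain ⟨c, hc, _⟩ := S.fact f h
        exact ⟨c, hc⟩
      · obtain ⟨rfl, hf⟩ := S.level_eq f h.symm
        exact ⟨.nil X, by simp [IndivChain.comp, hf]⟩
    -- uniqueness of pairs at a given level
    have key : ∀ {X : C} (p q : Σ Y : C, X ⟶ Y), S.L p.1 = S.L q.1 → p = q := by
      rintro X ⟨Y, f⟩ ⟨Y', f'⟩ h
      simp only at h
      by_cases h0 : S.L X = 0
      · have hY : Y = one := (S.zero_iff Y).mp (by have := S.mono f; omega)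
        have hY' : Y' = one := (S.zero_iff Y').mp (by have := S.mono f'; omega)
        subst hY; subst hY'
        rw [hone.hom_ext f f']
      · obtain ⟨c1, hc1⟩ := chainOf f
        obtain ⟨c2, hc2⟩ := chainOf (hone.from Y)
        obtain ⟨c1', hc1'⟩ := chainOf f'
        obtain ⟨c2', hc2'⟩ := chainOf (hone.from Y')
        obtain ⟨c, hc, hcu⟩ := S.fact (hone.from X) (by omega)
        have e1 : c1.append c2 = c := hcu _ (by
          rw [IndivChain.comp_append, hc1, hc2]; exact hone.hom_ext _ _)
        have e2 : c1'.append c2' = c := hcu _ (by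
          rw [IndivChain.comp_append, hc1', hc2']; exact hone.hom_ext _ _)
        calc (⟨Y, f⟩ : Σ Z, X ⟶ Z) = c.split (S.L Y) := by
              rw [← e1, IndivChain.split_append, hc1]
          _ = ⟨Y', f'⟩ := by rw [h, ← e2, IndivChain.split_append, hc1']
    intro X k hk
    obtain ⟨c, _⟩ := chainOf (hone.from X)
    have hsl : S.L (c.split k).1 = k := IndivChain.split_level c k (by omega) hk
    exact ⟨c.split k, hsl, fun q hq => key q (c.split k) (by rw [hq, hsl])⟩
  · rintro ⟨h1, h2, h3⟩
    have hmono : ∀ {X Y : C}, (X ⟶ Y) → ℓ Y ≤ ℓ X := fun f => not_lt.mp (h3 f)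
    refine ⟨⟨ℓ, hmono, ?_, ?_, ?_⟩, rfl⟩
    · intro X
      constructor
      · intro h0
        obtain ⟨p, hp, hup⟩ := h2 X 0 (Nat.zero_le _)
        have e : (⟨X, 𝟙 X⟩ : Σ Y, X ⟶ Y) = ⟨one, hone.from X⟩ :=
          (hup ⟨X, 𝟙 X⟩ h0).trans (hup ⟨one, hone.from X⟩ h1).symm
        exact congrArg Sigma.fst e
      · rintro rfl; exact h1
    · intro X Y f h
      obtain ⟨p, hp, hup⟩ := h2 X (ℓ Y) (by omega)
      have e : (⟨X, 𝟙 X⟩ : Σ Z, X ⟶ Z) = ⟨Y, f⟩ :=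
        (hup ⟨X, 𝟙 X⟩ (by simp; omega)).trans (hup ⟨Y, f⟩ rfl).symm
      obtain ⟨hXY, hf⟩ := Sigma.mk.inj_iff.mp e
      subst hXY
      exact ⟨rfl, by simpa using (eq_of_heq hf).symm⟩
    · intro X Y f hlt
      obtain ⟨c⟩ := IndivChain.chain_exists h2 hmono _ f rfl
      exact ⟨c, IndivChain.hom_eq h2 (hmono f) _ _,
        fun c' _ => IndivChain.chain_eq h2 c' c⟩
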